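/- Let a ∈ ℝ and suppose B⁻ₐ < ∞. Then for every F ∈ 𝓕, ∫_{(−∞,a)} (F(x) − F(a))² dm(x) ≤ 4·B⁻ₐ · ∫_{(−∞,a)} (dF/dS)²(t) dS(t). In particular the optimal Hardy constant over (−∞,a) is at most 4·B⁻ₐ. -/

import Mathlib

open MeasureTheory Set
open scoped ENNReal

lemma aux_lint_Ioo0 {d : ℝ} (hd : 0 < d) :
    ∫⁻ v in Ioo (0:ℝ) d, (ENNReal.ofReal v) ^ (-(1/2) : ℝ) =
      ENNReal.ofReal (2 * d ^ ((1:ℝ)/2)) := by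
  have hcong : ∫⁻ v in Ioo (0:ℝ) d, (ENNReal.ofReal v) ^ (-(1/2) : ℝ) =
      ∫⁻ v in Ioo (0:ℝ) d, ENNReal.ofReal (v ^ (-(1/2) : ℝ)) := by
    refine setLIntegral_congr_fun_ae measurableSet_Ioo (ae_of_all _ fun v hv => ?_)
    exact ENNReal.ofReal_rpow_of_pos hv.1
  rw [hcong]
  have hint : IntegrableOn (fun v : ℝ => v ^ (-(1/2) : ℝ)) (Ioo 0 d) := by
    have := (intervalIntegral.intervalIntegrable_rpow' (a := 0) (b := d)
      (r := -(1/2)) (by norm_num))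
    rw [intervalIntegrable_iff_integrableOn_Ioc_of_le hd.le] at this
    exact this.mono_set Ioo_subset_Ioc_self
  rw [← ofReal_integral_eq_lintegral_ofReal hint
    ((ae_restrict_iff' measurableSet_Ioo).2 (ae_of_all _ fun v hv => Real.rpow_nonneg hv.1.le _))]
  congr 1
  rw [← integral_Ioc_eq_integral_Ioo, ← intervalIntegral.integral_of_le hd.le,
    integral_rpow (Or.inl (by norm_num))]
  rw [Real.zero_rpow (by norm_num : (-(1/2):ℝ) + 1 ≠ 0)]
  norm_num
  rw [div_eq_mul_inv, mul_comm]
  norm_num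

lemma aux_lint_Ioi0 {k : ℝ} (hk : 0 < k) :
    ∫⁻ v in Ioi k, (ENNReal.ofReal v) ^ (-(3/2) : ℝ) =
      ENNReal.ofReal (2 * k ^ (-(1/2) : ℝ)) := by
  have hcong : ∫⁻ v in Ioi k, (ENNReal.ofReal v) ^ (-(3/2) : ℝ) =
      ∫⁻ v in Ioi k, ENNReal.ofReal (v ^ (-(3/2) : ℝ)) := by
    refine setLIntegral_congr_fun_ae measurableSet_Ioi (ae_of_all _ fun v hv => ?_)
    exact ENNReal.ofReal_rpow_of_pos (hk.trans hv)
  rw [hcong]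
  have hint : IntegrableOn (fun v : ℝ => v ^ (-(3/2) : ℝ)) (Ioi k) :=
    integrableOn_Ioi_rpow_of_lt (by norm_num) hk
  rw [← ofReal_integral_eq_lintegral_ofReal hint
    ((ae_restrict_iff' measurableSet_Ioi).2 (ae_of_all _ fun v hv =>
      Real.rpow_nonneg (hk.trans hv).le _))]
  congr 1
  rw [integral_Ioi_rpow_of_lt (by norm_num) hk]
  norm_num
  rw [div_eq_mul_inv, mul_comm]
  norm_num


lemma aux_refl (β : ℝ) (g : ℝ → ℝ≥0∞) (s : Set ℝ) :
    ∫⁻ u in (fun u => β - u) ⁻¹' s, g (β - u) = ∫⁻ v in s, g v := by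
  exact (Measure.measurePreserving_sub_left volume β).setLIntegral_comp_preimage_emb
    (MeasurableEquiv.subLeft β).measurableEmbedding g s

lemma aux_lint_Ioo {β c : ℝ} (h : c < β) :
    ∫⁻ u in Ioo c β, (ENNReal.ofReal (β - u)) ^ (-(1/2) : ℝ) =
      ENNReal.ofReal (2 * (β - c) ^ ((1:ℝ)/2)) := by
  have hpre : (fun u => β - u) ⁻¹' (Ioo 0 (β - c)) = Ioo c β := by
    ext u; simp only [mem_preimage, mem_Ioo]
    constructor <;> rintro ⟨h1, h2⟩ <;> constructor <;> linarith
  rw [← hpre, aux_refl β (fun v => (ENNReal.ofReal v) ^ (-(1/2) : ℝ)) _,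
    aux_lint_Ioo0 (by linarith : (0:ℝ) < β - c)]

lemma aux_lint_Iio {β c : ℝ} (h : c < β) :
    ∫⁻ u in Iio c, (ENNReal.ofReal (β - u)) ^ (-(3/2) : ℝ) =
      ENNReal.ofReal (2 * (β - c) ^ (-(1/2) : ℝ)) := by
  have hpre : (fun u => β - u) ⁻¹' (Ioi (β - c)) = Iio c := by
    ext u; simp only [mem_preimage, mem_Ioi, mem_Iio]
    constructor <;> intro <;> linarith
  rw [← hpre, aux_refl β (fun v => (ENNReal.ofReal v) ^ (-(3/2) : ℝ)) _,
    aux_lint_Ioi0 (by linarith : (0:ℝ) < β - c)]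

private lemma aux_CS
    (S : ℝ → ℝ) (hSmono : StrictMono S)
    (μS : Measure ℝ) (hSmeas : Measurable S) (F f g : ℝ → ℝ) (hg : Measurable g) (hfg : f =ᵐ[μS] g)
    (hfint : Integrable f μS)
    (a : ℝ) (hatom : μS {a} = 0)
    (hdF : ∀ c d : ℝ, c < d → F d - F c = ∫ t in Ioc c d, f t ∂μS)
    (W1 : ∀ x, x < a → ∫⁻ t in Ioo x a, (ENNReal.ofReal (S a - S t)) ^ (-(1/2) : ℝ) ∂μS
        = ENNReal.ofReal (2 * (S a - S x) ^ ((1:ℝ)/2)))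
    (x : ℝ) (hx : x < a) :
    ENNReal.ofReal ((F x - F a) ^ 2) ≤
      ENNReal.ofReal (2 * (S a - S x) ^ ((1:ℝ)/2)) *
        ∫⁻ t in Ioo x a, ENNReal.ofReal (g t ^ 2) * (ENNReal.ofReal (S a - S t)) ^ ((1:ℝ)/2) ∂μS
    := by
  have hIocIoo : μS.restrict (Ioc x a) = μS.restrict (Ioo x a) := by
    refine Measure.restrict_congr_set ?_
    rw [MeasureTheory.ae_eq_set]
    constructor
    · refine measure_mono_null (fun t ht => ?_) hatom
      obtain ⟨⟨h1, h2⟩, h3⟩ := ht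
      simp only [mem_Ioo, not_and, not_lt] at h3
      exact mem_singleton_iff.2 (le_antisymm h2 (h3 h1))
    · rw [Set.diff_eq_empty.2 Ioo_subset_Ioc_self]
      exact measure_empty
  -- step 1 : |F a - F x| ≤ ∫ |f|
  have h1 : |F a - F x| ≤ ∫ t in Ioc x a, |f t| ∂μS := by
    rw [hdF x a hx]
    simpa [Real.norm_eq_abs] using
      norm_integral_le_integral_norm (μ := μS.restrict (Ioc x a)) f
  have h1' : ENNReal.ofReal ((F x - F a)^2) = (ENNReal.ofReal |F a - F x|) ^ (2:ℕ) := by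
    rw [← ENNReal.ofReal_pow (abs_nonneg _), sq_abs, ← neg_sub (F a) (F x), neg_pow]
    norm_num
  have h2 : ENNReal.ofReal |F a - F x| ≤ ∫⁻ t in Ioo x a, ENNReal.ofReal |g t| ∂μS := by
    calc ENNReal.ofReal |F a - F x| ≤ ENNReal.ofReal (∫ t in Ioc x a, |f t| ∂μS) :=
          ENNReal.ofReal_le_ofReal h1
      _ = ∫⁻ t in Ioc x a, ENNReal.ofReal |f t| ∂μS := by
          rw [ofReal_integral_eq_lintegral_ofReal (hfint.abs.integrableOn)
            (ae_of_all _ fun t => abs_nonneg _)]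
      _ = ∫⁻ t in Ioo x a, ENNReal.ofReal |f t| ∂μS := by rw [hIocIoo]
      _ = ∫⁻ t in Ioo x a, ENNReal.ofReal |g t| ∂μS := by
          refine lintegral_congr_ae (ae_restrict_of_ae ?_)
          filter_upwards [hfg] with t ht
          rw [ht]
  -- step 2 : Cauchy-Schwarz
  set w : ℝ → ℝ≥0∞ := fun t => (ENNReal.ofReal (S a - S t)) ^ ((1:ℝ)/4) with hw
  have hwpos : ∀ t ∈ Ioo x a, w t ≠ 0 ∧ w t ≠ ⊤ := by
    intro t ht
    have h5 : 0 < S a - S t := sub_pos.2 (hSmono ht.2)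
    constructor
    · simp only [hw, ne_eq, ENNReal.rpow_eq_zero_iff, not_or]
      constructor
      · rintro ⟨h6, -⟩
        exact absurd h6 (by simp [ENNReal.ofReal_eq_zero]; linarith)
      · rintro ⟨h6, -⟩
        exact absurd h6 ENNReal.ofReal_ne_top
    · simp only [hw, ne_eq, ENNReal.rpow_eq_top_iff, not_or]
      constructor
      · rintro ⟨h6, -⟩
        rw [ENNReal.ofReal_eq_zero] at h6
        linarith
      · rintro ⟨h6, -⟩
        exact ENNReal.ofReal_ne_top h6
  have hsplit : ∫⁻ t in Ioo x a, ENNReal.ofReal |g t| ∂μS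
      = ∫⁻ t in Ioo x a, (ENNReal.ofReal |g t| * w t) * (w t)⁻¹ ∂μS := by
    refine setLIntegral_congr_fun_ae measurableSet_Ioo (ae_of_all _ fun t ht => ?_)
    rw [mul_assoc, ENNReal.mul_inv_cancel (hwpos t ht).1 (hwpos t ht).2, mul_one]
  -- apply Hölder with p = q = 2
  have hconj : Real.HolderConjugate 2 2 := Real.HolderConjugate.two_two
  have hm1 : AEMeasurable (fun t => ENNReal.ofReal |g t| * w t) (μS.restrict (Ioo x a)) := by
    refine AEMeasurable.mul ?_ ?_
    · exact (ENNReal.measurable_ofReal.comp hg.abs).aemeasurable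
    · exact ((ENNReal.measurable_ofReal.comp
        (measurable_const.sub hSmeas)).pow_const _).aemeasurable
  have hm2 : AEMeasurable (fun t => (w t)⁻¹) (μS.restrict (Ioo x a)) := by
    exact ((ENNReal.measurable_ofReal.comp
      (measurable_const.sub hSmeas)).pow_const _).inv.aemeasurable
  have hCS := ENNReal.lintegral_mul_le_Lp_mul_Lq (μS.restrict (Ioo x a)) hconj hm1 hm2
  -- identify the two factors
  have hfac1 : ∫⁻ t in Ioo x a, (ENNReal.ofReal |g t| * w t) ^ (2:ℝ) ∂μS
      = ∫⁻ t in Ioo x a, ENNReal.ofReal (g t ^ 2) * (ENNReal.ofReal (S a - S t)) ^ ((1:ℝ)/2) ∂μS := by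
    refine setLIntegral_congr_fun_ae measurableSet_Ioo (ae_of_all _ fun t ht => ?_)
    rw [ENNReal.mul_rpow_of_nonneg _ _ (by norm_num : (0:ℝ) ≤ 2)]
    congr 1
    · rw [ENNReal.ofReal_rpow_of_nonneg (abs_nonneg _) (by norm_num : (0:ℝ) ≤ 2)]
      congr 1
      rw [show ((2:ℝ)) = ((2:ℕ):ℝ) by norm_num, Real.rpow_natCast, sq_abs]
    · rw [hw, ← ENNReal.rpow_mul]
      norm_num
  have hfac2 : ∫⁻ t in Ioo x a, ((w t)⁻¹) ^ (2:ℝ) ∂μS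
      = ENNReal.ofReal (2 * (S a - S x) ^ ((1:ℝ)/2)) := by
    rw [← W1 x hx]
    refine setLIntegral_congr_fun_ae measurableSet_Ioo (ae_of_all _ fun t ht => ?_)
    rw [hw, ← ENNReal.rpow_neg, ← ENNReal.rpow_mul]
    norm_num
  -- put everything together
  calc ENNReal.ofReal ((F x - F a)^2) = (ENNReal.ofReal |F a - F x|) ^ (2:ℕ) := h1'
    _ ≤ (∫⁻ t in Ioo x a, ENNReal.ofReal |g t| ∂μS) ^ (2:ℕ) := by
        exact pow_le_pow_left' h2 2
    _ = (∫⁻ t in Ioo x a, ((fun t => ENNReal.ofReal |g t| * w t) * fun t => (w t)⁻¹) t ∂μS) ^ (2:ℕ) := by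
        rw [hsplit]; rfl
    _ ≤ ((∫⁻ t in Ioo x a, (ENNReal.ofReal |g t| * w t) ^ (2:ℝ) ∂μS) ^ ((1:ℝ)/2)
          * (∫⁻ t in Ioo x a, ((w t)⁻¹) ^ (2:ℝ) ∂μS) ^ ((1:ℝ)/2)) ^ (2:ℕ) := by
        exact pow_le_pow_left' hCS 2
    _ = (∫⁻ t in Ioo x a, (ENNReal.ofReal |g t| * w t) ^ (2:ℝ) ∂μS)
          * (∫⁻ t in Ioo x a, ((w t)⁻¹) ^ (2:ℝ) ∂μS) := by
        rw [mul_pow, ← ENNReal.rpow_natCast (_ ^ ((1:ℝ)/2)) 2, ← ENNReal.rpow_natCast (_ ^ ((1:ℝ)/2)) 2,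
          ← ENNReal.rpow_mul, ← ENNReal.rpow_mul]
        norm_num
    _ = ENNReal.ofReal (2 * (S a - S x) ^ ((1:ℝ)/2)) *
        ∫⁻ t in Ioo x a, ENNReal.ofReal (g t ^ 2) * (ENNReal.ofReal (S a - S t)) ^ ((1:ℝ)/2) ∂μS := by
        rw [hfac1, hfac2, mul_comm]

private lemma aux_G
    (S : ℝ → ℝ) (hSmono : StrictMono S) (hSmeas : Measurable S)
    (m : Measure ℝ) [IsFiniteMeasure m]
    (a : ℝ) (B : ℝ≥0∞) (hBfin : B ≠ ⊤)
    (hBd : ∀ x, x ≤ a → m (Iio x) * ENNReal.ofReal (S a - S x) ≤ B)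
    (T : ℝ → ℝ)
    (hST : ∀ u, S (T u) = u) (hTS : ∀ x, T (S x) = x) (hTmono : Monotone T)
    (hlt : ∀ (x u : ℝ), S x < u ↔ x < T u)
    (t : ℝ) (ht : t < a) :
    ∫⁻ x in Iio t, ENNReal.ofReal (2 * (S a - S x) ^ ((1:ℝ)/2)) ∂m ≤
      4 * B * (ENNReal.ofReal (S a - S t)) ^ (-(1/2) : ℝ) := by
  have hSta : S t < S a := hSmono ht
  set Θ : ℝ × ℝ → ℝ≥0∞ := fun p =>
    ({q : ℝ × ℝ | S q.1 < q.2}).indicator (fun q => (ENNReal.ofReal (S a - q.2)) ^ (-(1/2) : ℝ)) p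
    with hΘ
  have hΘmeas : Measurable Θ := by
    refine Measurable.indicator ?_ ?_
    · exact (ENNReal.measurable_ofReal.comp (measurable_const.sub measurable_snd)).pow_const _
    · exact measurableSet_lt (hSmeas.comp measurable_fst) measurable_snd
  have hΘx : ∀ x u : ℝ, Θ (x, u) = (Ioi (S x)).indicator
      (fun u => (ENNReal.ofReal (S a - u)) ^ (-(1/2) : ℝ)) u := by
    intro x u
    simp only [hΘ, indicator_apply, mem_setOf_eq, mem_Ioi]
  have hΘu : ∀ x u : ℝ, Θ (x, u) = (Iio (T u)).indicator
      (fun _ => (ENNReal.ofReal (S a - u)) ^ (-(1/2) : ℝ)) x := by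
    intro x u
    simp only [hΘ, indicator_apply, mem_setOf_eq, mem_Iio, hlt]
  -- rewrite integrand via the Ioo integral
  have step1 : ∫⁻ x in Iio t, ENNReal.ofReal (2 * (S a - S x) ^ ((1:ℝ)/2)) ∂m
      = ∫⁻ x in Iio t, (∫⁻ u in Iio (S a), Θ (x, u)) ∂m := by
    refine setLIntegral_congr_fun_ae measurableSet_Iio (ae_of_all _ fun x hx => ?_)
    have hxa : S x < S a := hSmono (hx.trans ht)
    rw [← aux_lint_Ioo hxa]
    have : ∫⁻ u in Iio (S a), Θ (x, u)
        = ∫⁻ u in Ioi (S x) ∩ Iio (S a),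
            (ENNReal.ofReal (S a - u)) ^ (-(1/2) : ℝ) := by
      simp_rw [hΘx x]
      rw [lintegral_indicator measurableSet_Ioi, Measure.restrict_restrict measurableSet_Ioi]
    rw [this, Set.Ioi_inter_Iio]
  -- Fubini
  have step2 : ∫⁻ x in Iio t, (∫⁻ u in Iio (S a), Θ (x, u)) ∂m
      = ∫⁻ u in Iio (S a), (∫⁻ x in Iio t, Θ (x, u) ∂m) := by
    exact lintegral_lintegral_swap (hΘmeas.aemeasurable)
  -- inner integral
  have step3 : ∀ u : ℝ, ∫⁻ x in Iio t, Θ (x, u) ∂m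
      = (ENNReal.ofReal (S a - u)) ^ (-(1/2) : ℝ) * m (Iio (T u) ∩ Iio t) := by
    intro u
    simp_rw [hΘu _ u]
    rw [lintegral_indicator measurableSet_Iio, setLIntegral_const,
      Measure.restrict_apply measurableSet_Iio]
  rw [step1, step2]
  simp_rw [step3]
  -- split the domain
  have hsplit : Iio (S a) = Iio (S t) ∪ Ico (S t) (S a) := by
    ext u; simp only [mem_Iio, mem_union, mem_Ico]
    constructor
    · intro h; rcases lt_or_ge u (S t) with h' | h'
      · exact Or.inl h'
      · exact Or.inr ⟨h', h⟩
    · rintro (h | ⟨-, h⟩) <;> [linarith; exact h]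
  have hdisj : Disjoint (Iio (S t)) (Ico (S t) (S a)) := by
    rw [Set.disjoint_left]
    intro u hu hu'
    exact absurd (mem_Iio.1 hu) (not_lt.2 hu'.1)
  rw [hsplit, lintegral_union measurableSet_Ico hdisj]
  set c : ℝ≥0∞ := ENNReal.ofReal (S a - S t) with hc
  have hc0 : c ≠ 0 := by
    simp only [hc, ne_eq, ENNReal.ofReal_eq_zero, not_le]
    linarith
  have hctop : c ≠ ⊤ := ENNReal.ofReal_ne_top
  -- piece 1
  have piece1 : ∫⁻ u in Iio (S t),
      (ENNReal.ofReal (S a - u)) ^ (-(1/2) : ℝ) * m (Iio (T u) ∩ Iio t)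
      ≤ 2 * B * c ^ (-(1/2) : ℝ) := by
    have hpt : ∀ u ∈ Iio (S t),
        (ENNReal.ofReal (S a - u)) ^ (-(1/2) : ℝ) * m (Iio (T u) ∩ Iio t)
        ≤ B * (ENNReal.ofReal (S a - u)) ^ (-(3/2) : ℝ) := by
      intro u hu
      rw [mem_Iio] at hu
      have hua : u < S a := hu.trans hSta
      have hcu0 : ENNReal.ofReal (S a - u) ≠ 0 := by
        simp only [ne_eq, ENNReal.ofReal_eq_zero, not_le]; linarith
      have hTut : Iio (T u) ∩ Iio t = Iio (T u) := by
        refine inter_eq_left.2 (fun y hy => ?_)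
        rw [mem_Iio] at hy ⊢
        calc y < T u := hy
          _ ≤ T (S t) := hTmono hu.le
          _ = t := hTS t
      have hTua : T u ≤ a := by
        have h7 := hTmono hua.le
        rwa [hTS] at h7
      have hm : m (Iio (T u)) * ENNReal.ofReal (S a - u) ≤ B := by
        have := hBd (T u) hTua
        rwa [hST] at this
      calc (ENNReal.ofReal (S a - u)) ^ (-(1/2) : ℝ) * m (Iio (T u) ∩ Iio t)
          ≤ (ENNReal.ofReal (S a - u)) ^ (-(1/2) : ℝ)
            * (B * (ENNReal.ofReal (S a - u))⁻¹) := by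
            refine mul_le_mul_right ?_ _
            rw [hTut]
            rw [← ENNReal.le_div_iff_mul_le (Or.inl hcu0) (Or.inl ENNReal.ofReal_ne_top)] at hm
            rwa [ENNReal.div_eq_inv_mul, mul_comm] at hm
        _ = B * (ENNReal.ofReal (S a - u)) ^ (-(3/2) : ℝ) := by
            rw [← ENNReal.rpow_neg_one (ENNReal.ofReal (S a - u)), mul_comm, mul_assoc,
              ← ENNReal.rpow_add _ _ hcu0 ENNReal.ofReal_ne_top]
            norm_num
    calc ∫⁻ u in Iio (S t), (ENNReal.ofReal (S a - u)) ^ (-(1/2) : ℝ) * m (Iio (T u) ∩ Iio t)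
        ≤ ∫⁻ u in Iio (S t), B * (ENNReal.ofReal (S a - u)) ^ (-(3/2) : ℝ) := by
          refine lintegral_mono_ae ((ae_restrict_iff' measurableSet_Iio).2 (ae_of_all _ hpt))
      _ = B * ∫⁻ u in Iio (S t), (ENNReal.ofReal (S a - u)) ^ (-(3/2) : ℝ) := by
          rw [lintegral_const_mul]
          exact (ENNReal.measurable_ofReal.comp (measurable_const.sub measurable_id)).pow_const _
      _ = 2 * B * c ^ (-(1/2) : ℝ) := by
          rw [aux_lint_Iio hSta, ENNReal.ofReal_mul (by norm_num : (0:ℝ) ≤ 2),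
            ← ENNReal.ofReal_rpow_of_pos (by linarith : (0:ℝ) < S a - S t)]
          rw [show ENNReal.ofReal (2:ℝ) = 2 by simp]
          ring
  -- piece 2
  have piece2 : ∫⁻ u in Ico (S t) (S a),
      (ENNReal.ofReal (S a - u)) ^ (-(1/2) : ℝ) * m (Iio (T u) ∩ Iio t)
      ≤ 2 * B * c ^ (-(1/2) : ℝ) := by
    have hmt : m (Iio t) ≤ B / c := by
      rw [ENNReal.le_div_iff_mul_le (Or.inl hc0) (Or.inl hctop)]
      exact hBd t ht.le
    have hpt : ∀ u ∈ Ico (S t) (S a),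
        (ENNReal.ofReal (S a - u)) ^ (-(1/2) : ℝ) * m (Iio (T u) ∩ Iio t)
        ≤ (ENNReal.ofReal (S a - u)) ^ (-(1/2) : ℝ) * (B / c) := by
      intro u hu
      refine mul_le_mul_right (le_trans (measure_mono ?_) hmt) _
      intro y hy
      exact hy.2
    calc ∫⁻ u in Ico (S t) (S a),
        (ENNReal.ofReal (S a - u)) ^ (-(1/2) : ℝ) * m (Iio (T u) ∩ Iio t)
        ≤ ∫⁻ u in Ico (S t) (S a), (ENNReal.ofReal (S a - u)) ^ (-(1/2) : ℝ) * (B / c) := by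
          refine lintegral_mono_ae ((ae_restrict_iff' measurableSet_Ico).2 (ae_of_all _ hpt))
      _ = (∫⁻ u in Ico (S t) (S a), (ENNReal.ofReal (S a - u)) ^ (-(1/2) : ℝ)) * (B / c) := by
          rw [lintegral_mul_const]
          exact (ENNReal.measurable_ofReal.comp (measurable_const.sub measurable_id)).pow_const _
      _ = (∫⁻ u in Ioo (S t) (S a), (ENNReal.ofReal (S a - u)) ^ (-(1/2) : ℝ)) * (B / c) := by
          congr 1
          rw [← Measure.restrict_congr_set
            (Ioo_ae_eq_Ico : Ioo (S t) (S a) =ᵐ[volume] Ico (S t) (S a))]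
      _ = 2 * B * c ^ (-(1/2) : ℝ) := by
          rw [aux_lint_Ioo hSta, ENNReal.ofReal_mul (by norm_num : (0:ℝ) ≤ 2),
            ← ENNReal.ofReal_rpow_of_pos (by linarith : (0:ℝ) < S a - S t), ← hc,
            ENNReal.div_eq_inv_mul, ← ENNReal.rpow_neg_one c,
            show ENNReal.ofReal (2:ℝ) = 2 by simp]
          rw [mul_right_comm]
          calc 2 * (c ^ (-1:ℝ) * B) * c ^ ((1:ℝ)/2)
              = 2 * B * (c ^ (-1:ℝ) * c ^ ((1:ℝ)/2)) := by ring
            _ = 2 * B * c ^ (-(1/2):ℝ) := by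
                rw [← ENNReal.rpow_add _ _ hc0 hctop]
                norm_num
  calc (∫⁻ u in Iio (S t), (ENNReal.ofReal (S a - u)) ^ (-(1/2) : ℝ) * m (Iio (T u) ∩ Iio t))
      + ∫⁻ u in Ico (S t) (S a), (ENNReal.ofReal (S a - u)) ^ (-(1/2) : ℝ) * m (Iio (T u) ∩ Iio t)
      ≤ 2 * B * c ^ (-(1/2) : ℝ) + 2 * B * c ^ (-(1/2) : ℝ) := add_le_add piece1 piece2
    _ = 4 * B * c ^ (-(1/2) : ℝ) := by ring

private lemma aux_final
    (S : ℝ → ℝ) (hSmono : StrictMono S) (hSmeas : Measurable S)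
    (μS : Measure ℝ) [SigmaFinite μS]
    (m : Measure ℝ) [IsFiniteMeasure m]
    (F f g : ℝ → ℝ) (hg : Measurable g) (hfg : f =ᵐ[μS] g)
    (a : ℝ) (B : ℝ≥0∞)
    (key1 : ∀ x ∈ Iio a, ENNReal.ofReal ((F x - F a) ^ 2) ≤
      ENNReal.ofReal (2 * (S a - S x) ^ ((1:ℝ)/2)) *
        ∫⁻ t in Ioo x a, ENNReal.ofReal (g t ^ 2) * (ENNReal.ofReal (S a - S t)) ^ ((1:ℝ)/2) ∂μS)
    (Gbound : ∀ t ∈ Iio a, ∫⁻ x in Iio t, ENNReal.ofReal (2 * (S a - S x) ^ ((1:ℝ)/2)) ∂m ≤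
      4 * B * (ENNReal.ofReal (S a - S t)) ^ (-(1/2) : ℝ)) :
    ∫⁻ x in Iio a, ENNReal.ofReal ((F x - F a) ^ 2) ∂m ≤
      4 * B * ∫⁻ t in Iio a, ENNReal.ofReal (f t ^ 2) ∂μS := by
  set c1 : ℝ → ℝ≥0∞ := fun x => ENNReal.ofReal (2 * (S a - S x) ^ ((1:ℝ)/2)) with hc1
  set c2 : ℝ → ℝ≥0∞ := fun t =>
    ENNReal.ofReal (g t ^ 2) * (ENNReal.ofReal (S a - S t)) ^ ((1:ℝ)/2) with hc2
  have hc1meas : Measurable c1 :=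
    ENNReal.measurable_ofReal.comp (((measurable_const.sub hSmeas).pow_const _).const_mul 2)
  have hc2meas : Measurable c2 :=
    (ENNReal.measurable_ofReal.comp (hg.pow_const 2)).mul
      ((ENNReal.measurable_ofReal.comp (measurable_const.sub hSmeas)).pow_const _)
  set Ψ : ℝ × ℝ → ℝ≥0∞ := fun p =>
    ({q : ℝ × ℝ | q.1 < q.2}).indicator (fun q => c1 q.1 * c2 q.2) p with hΨ
  have hΨmeas : Measurable Ψ := by
    refine Measurable.indicator ?_ (measurableSet_lt measurable_fst measurable_snd)
    exact (hc1meas.comp measurable_fst).mul (hc2meas.comp measurable_snd)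
  have hΨx : ∀ x t : ℝ, Ψ (x, t) = (Ioi x).indicator (fun t => c1 x * c2 t) t := by
    intro x t; simp only [hΨ, indicator_apply, mem_setOf_eq, mem_Ioi]
  have hΨt : ∀ x t : ℝ, Ψ (x, t) = (Iio t).indicator (fun x => c1 x * c2 t) x := by
    intro x t; simp only [hΨ, indicator_apply, mem_setOf_eq, mem_Iio]
  have step1 : ∫⁻ x in Iio a, ENNReal.ofReal ((F x - F a) ^ 2) ∂m ≤
      ∫⁻ x in Iio a, (∫⁻ t in Iio a, Ψ (x, t) ∂μS) ∂m := by
    refine lintegral_mono_ae ((ae_restrict_iff' measurableSet_Iio).2 (ae_of_all _ fun x hx => ?_))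
    refine (key1 x hx).trans (le_of_eq ?_)
    have : ∫⁻ t in Iio a, Ψ (x, t) ∂μS = ∫⁻ t in Ioo x a, c1 x * c2 t ∂μS := by
      simp_rw [hΨx x]
      rw [lintegral_indicator measurableSet_Ioi, Measure.restrict_restrict measurableSet_Ioi,
        Set.Ioi_inter_Iio]
    rw [this, lintegral_const_mul _ hc2meas]
  have step2 : ∫⁻ x in Iio a, (∫⁻ t in Iio a, Ψ (x, t) ∂μS) ∂m
      = ∫⁻ t in Iio a, (∫⁻ x in Iio a, Ψ (x, t) ∂m) ∂μS :=
    lintegral_lintegral_swap hΨmeas.aemeasurable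
  have step3 : ∀ t ∈ Iio a, ∫⁻ x in Iio a, Ψ (x, t) ∂m
      = (∫⁻ x in Iio t, c1 x ∂m) * c2 t := by
    intro t ht
    simp_rw [hΨt _ t]
    rw [lintegral_indicator measurableSet_Iio, Measure.restrict_restrict measurableSet_Iio,
      Set.Iio_inter_Iio, min_eq_left (le_of_lt ht), lintegral_mul_const _ hc1meas]
  calc ∫⁻ x in Iio a, ENNReal.ofReal ((F x - F a) ^ 2) ∂m
      ≤ ∫⁻ x in Iio a, (∫⁻ t in Iio a, Ψ (x, t) ∂μS) ∂m := step1
    _ = ∫⁻ t in Iio a, (∫⁻ x in Iio a, Ψ (x, t) ∂m) ∂μS := step2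
    _ ≤ ∫⁻ t in Iio a, 4 * B * ENNReal.ofReal (g t ^ 2) ∂μS := by
        refine lintegral_mono_ae ((ae_restrict_iff' measurableSet_Iio).2
          (ae_of_all _ fun t ht => ?_))
        rw [step3 t ht]
        have hst : S t < S a := hSmono ht
        have h0 : ENNReal.ofReal (S a - S t) ≠ 0 := by
          simp only [ne_eq, ENNReal.ofReal_eq_zero, not_le]; linarith
        calc (∫⁻ x in Iio t, c1 x ∂m) * c2 t
            ≤ (4 * B * (ENNReal.ofReal (S a - S t)) ^ (-(1/2) : ℝ)) * c2 t :=
              mul_le_mul_left (Gbound t ht) _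
          _ = 4 * B * ENNReal.ofReal (g t ^ 2) := by
              rw [hc2]
              simp only
              rw [mul_comm (ENNReal.ofReal (g t ^ 2)), ← mul_assoc, mul_assoc _ _ (ENNReal.ofReal (S a - S t) ^ ((1:ℝ)/2)),
                ← ENNReal.rpow_add _ _ h0 ENNReal.ofReal_ne_top]
              norm_num
    _ = 4 * B * ∫⁻ t in Iio a, ENNReal.ofReal (g t ^ 2) ∂μS := by
        exact lintegral_const_mul (f := fun t => ENNReal.ofReal (g t ^ 2)) (4*B) ((hg.pow_const 2).ennreal_ofReal)
    _ = 4 * B * ∫⁻ t in Iio a, ENNReal.ofReal (f t ^ 2) ∂μS := by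
        congr 1
        refine lintegral_congr_ae (ae_restrict_of_ae ?_)
        filter_upwards [hfg] with t ht
        rw [ht]

/-- If `B⁻ₐ < ∞`, then the Hardy inequality over `(−∞,a)` holds with
constant `4 · B⁻ₐ`: for every `F ∈ 𝓕` (with density `f = dF/dS`),
`∫_{(−∞,a)} (F(x) − F(a))² dm ≤ 4·B⁻ₐ · ∫_{(−∞,a)} f² dS`. -/
theorem hardy_upper_bound_left
    (S : ℝ → ℝ) (hScont : Continuous S) (hSmono : StrictMono S)
    (hStop : Filter.Tendsto S Filter.atTop Filter.atTop)
    (hSbot : Filter.Tendsto S Filter.atBot Filter.atBot)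
    (μS : Measure ℝ)
    (hμS : ∀ c d : ℝ, c ≤ d → μS (Ioc c d) = ENNReal.ofReal (S d - S c))
    (m : Measure ℝ) [IsFiniteMeasure m]
    (a : ℝ)
    (B : ℝ≥0∞)
    (hB : B = ⨆ x ∈ Iic a, m (Iio x) * ENNReal.ofReal (S a - S x))
    (hBfin : B ≠ ⊤)
    (F f : ℝ → ℝ)
    (hFL2 : MemLp F 2 m)
    (hfint : Integrable f μS)
    (hfL2 : MemLp f 2 μS)
    (hdF : ∀ c d : ℝ, c < d → F d - F c = ∫ t in Ioc c d, f t ∂μS) :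
    ∫⁻ x in Iio a, ENNReal.ofReal ((F x - F a) ^ 2) ∂m ≤
      4 * B * ∫⁻ t in Iio a, ENNReal.ofReal (f t ^ 2) ∂μS := by
  -- surjectivity and the inverse function T
  have hSsurj : Function.Surjective S := Continuous.surjective hScont hStop hSbot
  set e : ℝ ≃o ℝ := StrictMono.orderIsoOfSurjective S hSmono hSsurj with he
  have hecoe : ∀ x, e x = S x := fun x => rfl
  set T : ℝ → ℝ := fun u => e.symm u with hT
  have hST : ∀ u, S (T u) = u := fun u => e.apply_symm_apply u
  have hTS : ∀ x, T (S x) = x := fun x => e.symm_apply_apply x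
  have hTmono : Monotone T := fun u v huv => e.symm.monotone huv
  have hlt : ∀ (x u : ℝ), S x < u ↔ x < T u := by
    intro x u; conv_lhs => rw [← hST u]
    exact hSmono.lt_iff_lt
  have hlt2 : ∀ (u x : ℝ), u < S x ↔ T u < x := by
    intro u x; conv_lhs => rw [← hST u]
    exact hSmono.lt_iff_lt
  have hle : ∀ (x u : ℝ), S x ≤ u ↔ x ≤ T u := by
    intro x u
    rw [← not_lt, ← not_lt, not_iff_not]
    exact hlt2 u x
  have hpreIoc : ∀ c d : ℝ, S ⁻¹' Ioc c d = Ioc (T c) (T d) := by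
    intro c d; ext t
    simp only [mem_preimage, mem_Ioc]
    rw [hlt2 c t, hle t d]
  -- sigma-finiteness of μS
  haveI hσ : SigmaFinite μS := by
    refine ⟨⟨⟨fun n => Ioc (-(n:ℝ)) n, fun _ => trivial, fun n => ?_, ?_⟩⟩⟩
    · rw [hμS _ _ (by simpa using neg_le_self n.cast_nonneg)]
      exact ENNReal.ofReal_lt_top
    · ext x
      simp only [mem_iUnion, mem_Ioc, mem_univ, iff_true]
      obtain ⟨n, hn⟩ := exists_nat_gt |x|
      obtain ⟨h1, h2⟩ := abs_lt.1 hn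
      exact ⟨n, by linarith, by linarith⟩
  -- μS has no atoms
  have hatom : ∀ r : ℝ, μS {r} = 0 := by
    intro r
    have hle' : ∀ n : ℕ, μS {r} ≤ ENNReal.ofReal (S r - S (r - 1/(n+1))) := by
      intro n
      rw [← hμS _ _ (by nlinarith [one_div_pos.2 (by positivity : (0:ℝ) < (n:ℝ)+1)] :
        r - 1/((n:ℝ)+1) ≤ r)]
      refine measure_mono ?_
      intro y hy
      rw [mem_singleton_iff] at hy
      subst hy
      exact ⟨by nlinarith [one_div_pos.2 (by positivity : (0:ℝ) < (n:ℝ)+1)], le_refl _⟩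
    have htend : Filter.Tendsto (fun n : ℕ => ENNReal.ofReal (S r - S (r - 1/(n+1))))
        Filter.atTop (nhds 0) := by
      have h1 : Filter.Tendsto (fun n : ℕ => r - 1/((n:ℝ)+1)) Filter.atTop (nhds r) := by
        simpa using (tendsto_const_nhds (x := r)).sub (tendsto_one_div_add_atTop_nhds_zero_nat)
      have h3 := (hScont.tendsto r).comp h1
      have h2 : Filter.Tendsto (fun n : ℕ => S r - S (r - 1/(n+1))) Filter.atTop (nhds 0) := by
        have h4 := Filter.Tendsto.sub
          (tendsto_const_nhds : Filter.Tendsto (fun _ : ℕ => S r) Filter.atTop (nhds (S r))) h3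
        simpa using h4
      have h5 := (ENNReal.continuous_ofReal.tendsto 0).comp h2
      rw [ENNReal.ofReal_zero] at h5
      exact h5
    simpa using ge_of_tendsto' htend hle'
  -- the pushforward of μS under S is Lebesgue measure
  have hmap : Measure.map S μS = volume := by
    refine Measure.ext_of_Ioc' _ _ ?_ ?_ <;> intro c d hcd <;>
      rw [Measure.map_apply hScont.measurable measurableSet_Ioc, hpreIoc,
        hμS _ _ (hTmono hcd.le), hST, hST]
    · exact ENNReal.ofReal_ne_top
    · rw [Real.volume_Ioc]
  -- change of variables
  have hsub : ∀ (A : Set ℝ) (g : ℝ → ℝ≥0∞),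
      ∫⁻ t in S ⁻¹' A, g (S t) ∂μS = ∫⁻ u in A, g u := by
    intro A g
    have hemb : MeasurableEmbedding S := by
      have h : (e.toHomeomorph : ℝ → ℝ) = S := funext fun x => hecoe x
      have := (e.toHomeomorph (α := ℝ) (β := ℝ)).measurableEmbedding
      rwa [h] at this
    exact MeasurePreserving.setLIntegral_comp_preimage_emb ⟨hemb.measurable, hmap⟩ hemb g A
  -- the weight integral W1
  have W1 : ∀ x, x < a → ∫⁻ t in Ioo x a, (ENNReal.ofReal (S a - S t)) ^ (-(1/2) : ℝ) ∂μS
      = ENNReal.ofReal (2 * (S a - S x) ^ ((1:ℝ)/2)) := by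
    intro x hx
    have hpre : Ioo x a = S ⁻¹' (Ioo (S x) (S a)) := by
      ext t
      simp only [mem_Ioo, mem_preimage]
      rw [hSmono.lt_iff_lt, hSmono.lt_iff_lt]
    rw [hpre, hsub (Ioo (S x) (S a)) (fun u => (ENNReal.ofReal (S a - u)) ^ (-(1/2) : ℝ)),
      aux_lint_Ioo (hSmono hx)]
  -- the supremum bound
  have hBd : ∀ x, x ≤ a → m (Iio x) * ENNReal.ofReal (S a - S x) ≤ B := by
    intro x hx
    rw [hB]
    exact le_iSup₂ (f := fun x (_ : x ∈ Iic a) => m (Iio x) * ENNReal.ofReal (S a - S x)) x hx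
  -- a measurable version of f
  have hfae : AEMeasurable f μS := hfint.aestronglyMeasurable.aemeasurable
  set g : ℝ → ℝ := hfae.mk f with hgdef
  have hg : Measurable g := hfae.measurable_mk
  have hfg : f =ᵐ[μS] g := hfae.ae_eq_mk
  -- conclude
  exact aux_final S hSmono hScont.measurable μS m F f g hg hfg a B
    (fun x hx => aux_CS S hSmono μS hScont.measurable F f g hg hfg hfint a (hatom a) hdF W1 x hx)
    (fun t ht => aux_G S hSmono hScont.measurable m a B hBfin hBd T hST hTS hTmono hlt t ht)
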